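/- Let arm i yield s_i i.i.d. samples in [0,1] with mean μ_i and arm j yield s_j i.i.d. samples in [0,1] with mean μ_j, all samples mutually independent, with μ_i < μ_j and Δ = μ_j - μ_i. Let t > 1 and suppose s_i ≥ 8 ln t / Δ². Then the probability that the UCB indices satisfy μ̂_i + √(2 ln t / s_i) ≥ μ̂_j + √(2 ln t / s_j) is at most 2 t^{-4}. -/

import Mathlib

open MeasureTheory ProbabilityTheory Real Finset

set_option linter.unusedSectionVars false

section Aux

open Real

lemma hoeff_D_pos (p : ℝ) (hp0 : 0 ≤ p) (hp1 : p ≤ 1) (x : ℝ) :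
    0 < 1 - p + p * Real.exp x := by
  rcases le_total (Real.exp x) 1 with h | h
  · nlinarith [Real.exp_pos x]
  · nlinarith [Real.exp_pos x]

lemma hoeff_key (p : ℝ) (hp0 : 0 ≤ p) (hp1 : p ≤ 1) (l : ℝ) :
    1 - p + p * Real.exp l ≤ Real.exp (p * l + l ^ 2 / 8) := by
  have hD := hoeff_D_pos p hp0 hp1
  set D : ℝ → ℝ := fun x => 1 - p + p * Real.exp x with hDdef
  have hDd : ∀ x, HasDerivAt D (p * Real.exp x) x := fun x => by
    exact ((Real.hasDerivAt_exp x).const_mul p).const_add (1 - p)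
  set q : ℝ → ℝ := fun x => p * Real.exp x / D x with hqdef
  set f' : ℝ → ℝ := fun x => q x - (p + x / 4) with hf'def
  set f : ℝ → ℝ := fun x => Real.log (D x) - (p * x + x ^ 2 / 8) with hfdef
  have hfd : ∀ x, HasDerivAt f (f' x) x := by
    intro x
    have h1 : HasDerivAt (fun x => Real.log (D x)) (q x) x :=
      (hDd x).log (hD x).ne'
    have h2 : HasDerivAt (fun x : ℝ => p * x + x ^ 2 / 8) (p + x / 4) x := by
      have := ((hasDerivAt_id x).const_mul p).add ((hasDerivAt_pow 2 x).div_const 8)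
      refine this.congr_deriv ?_
      ring
    exact h1.sub h2
  have hqd : ∀ x, HasDerivAt q (q x * (1 - q x)) x := by
    intro x
    have h1 : HasDerivAt (fun x => p * Real.exp x) (p * Real.exp x) x :=
      (Real.hasDerivAt_exp x).const_mul p
    have := h1.div (hDd x) (hD x).ne'
    refine this.congr_deriv ?_
    have hDx : D x ≠ 0 := (hD x).ne'
    rw [hqdef]
    field_simp [hqdef]
  have hf'd : ∀ x, HasDerivAt f' (q x * (1 - q x) - 1/4) x := by
    intro x
    have h2 : HasDerivAt (fun x : ℝ => p + x / 4) (1/4 : ℝ) x := by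
      simpa using (hasDerivAt_id x).div_const 4 |>.const_add p
    exact (hqd x).sub h2
  have hanti : Antitone f' := by
    apply antitone_of_deriv_nonpos (fun x => (hf'd x).differentiableAt)
    intro x
    rw [(hf'd x).deriv]
    nlinarith [sq_nonneg (1 - 2 * q x)]
  have hf'0 : f' 0 = 0 := by
    simp only [hf'def, hqdef, hDdef, Real.exp_zero, mul_one]
    have h1 : 1 - p + p = 1 := by ring
    rw [h1]
    simp
  have hf0 : f 0 = 0 := by
    simp [hfdef, hDdef]
  have hle : f l ≤ 0 := by
    rcases le_total 0 l with h | h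
    · have : AntitoneOn f (Set.Ici (0:ℝ)) := by
        apply antitoneOn_of_deriv_nonpos (convex_Ici 0)
          (fun x _ => (hfd x).continuousAt.continuousWithinAt)
          (fun x _ => (hfd x).differentiableAt.differentiableWithinAt)
        intro x hx
        rw [(hfd x).deriv]
        rw [interior_Ici] at hx
        calc f' x ≤ f' 0 := hanti (le_of_lt hx)
        _ = 0 := hf'0
      calc f l ≤ f 0 := this Set.self_mem_Ici h h
      _ = 0 := hf0
    · have : MonotoneOn f (Set.Iic (0:ℝ)) := by
        apply monotoneOn_of_deriv_nonneg (convex_Iic 0)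
          (fun x _ => (hfd x).continuousAt.continuousWithinAt)
          (fun x _ => (hfd x).differentiableAt.differentiableWithinAt)
        intro x hx
        rw [(hfd x).deriv]
        rw [interior_Iic] at hx
        calc (0:ℝ) = f' 0 := hf'0.symm
        _ ≤ f' x := hanti (le_of_lt hx)
      calc f l ≤ f 0 := this h Set.self_mem_Iic h
      _ = 0 := hf0
  have : Real.log (D l) ≤ p * l + l ^ 2 / 8 := by
    have := hle
    simp only [hfdef] at this
    linarith
  calc D l = Real.exp (Real.log (D l)) := (Real.exp_log (hD l)).symm
  _ ≤ Real.exp (p * l + l ^ 2 / 8) := Real.exp_le_exp.2 this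

open Real MeasureTheory ProbabilityTheory

variable {Ω : Type*} [MeasurableSpace Ω] {P : Measure Ω} [IsProbabilityMeasure P]

lemma hoeff_int_Z {Z : Ω → ℝ} (hm : Measurable Z)
    (hb : ∀ᵐ ω ∂P, Z ω ∈ Set.Icc (0:ℝ) 1) : Integrable Z P := by
  refine Integrable.mono' (integrable_const (1:ℝ)) hm.aestronglyMeasurable ?_
  filter_upwards [hb] with ω hω
  rw [Real.norm_eq_abs, abs_le]
  exact ⟨by linarith [hω.1], hω.2⟩

lemma hoeff_int_exp {Z : Ω → ℝ} (hm : Measurable Z)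
    (hb : ∀ᵐ ω ∂P, Z ω ∈ Set.Icc (0:ℝ) 1) (l : ℝ) :
    Integrable (fun ω => Real.exp (l * Z ω)) P := by
  refine Integrable.mono' (integrable_const (Real.exp |l|))
    ((hm.const_mul l).exp.aestronglyMeasurable) ?_
  filter_upwards [hb] with ω hω
  rw [Real.norm_eq_abs, abs_of_pos (Real.exp_pos _), Real.exp_le_exp]
  calc l * Z ω ≤ |l * Z ω| := le_abs_self _
  _ = |l| * |Z ω| := abs_mul _ _
  _ ≤ |l| * 1 := by
      have : |Z ω| ≤ 1 := abs_le.2 ⟨by linarith [hω.1], hω.2⟩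
      exact mul_le_mul_of_nonneg_left this (abs_nonneg l)
  _ = |l| := mul_one _

lemma hoeff_mgf {Z : Ω → ℝ} (hm : Measurable Z)
    (hb : ∀ᵐ ω ∂P, Z ω ∈ Set.Icc (0:ℝ) 1) {p : ℝ} (hp : ∫ ω, Z ω ∂P = p) (l : ℝ) :
    mgf Z P l ≤ Real.exp (p * l + l ^ 2 / 8) := by
  have hZi : Integrable Z P := hoeff_int_Z hm hb
  have hp0 : 0 ≤ p := by
    rw [← hp]
    apply integral_nonneg_of_ae
    filter_upwards [hb] with ω hω using hω.1
  have hp1 : p ≤ 1 := by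
    rw [← hp]
    calc ∫ ω, Z ω ∂P ≤ ∫ _ω, (1:ℝ) ∂P := by
          apply integral_mono_ae hZi (integrable_const 1)
          filter_upwards [hb] with ω hω using hω.2
    _ = 1 := by simp
  have step1 : mgf Z P l ≤ 1 - p + p * Real.exp l := by
    have hgint : Integrable (fun ω => 1 - Z ω + Z ω * Real.exp l) P := by
      exact ((integrable_const (1:ℝ)).sub hZi).add (hZi.mul_const _)
    have hmono : mgf Z P l ≤ ∫ ω, (1 - Z ω + Z ω * Real.exp l) ∂P := by
      unfold mgf
      apply integral_mono_of_nonneg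
      · filter_upwards with ω using (Real.exp_pos _).le
      · exact hgint
      · filter_upwards [hb] with ω hω
        have := convexOn_exp.2 (Set.mem_univ (0:ℝ)) (Set.mem_univ l)
          (by linarith [hω.2] : (0:ℝ) ≤ 1 - Z ω) hω.1 (by ring)
        simpa [smul_eq_mul, mul_comm] using this
    calc mgf Z P l ≤ ∫ ω, (1 - Z ω + Z ω * Real.exp l) ∂P := hmono
    _ = 1 - p + p * Real.exp l := by
        have : ∀ ω, 1 - Z ω + Z ω * Real.exp l = 1 + Z ω * (Real.exp l - 1) := by
          intro ω; ring
        simp_rw [this]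
        rw [integral_add (integrable_const (1:ℝ)) (hZi.mul_const _),
          integral_mul_const, hp]
        simp
        ring
  exact step1.trans (hoeff_key p hp0 hp1 l)

open Real MeasureTheory ProbabilityTheory Finset

variable {Ω : Type*} [MeasurableSpace Ω] {P : Measure Ω} [IsProbabilityMeasure P]

lemma hoeff_mgf_sum_le {n : ℕ} {Z : Fin n → Ω → ℝ} (hm : ∀ i, Measurable (Z i))
    (hindep : iIndepFun Z P)
    (hb : ∀ i, ∀ᵐ ω ∂P, Z i ω ∈ Set.Icc (0:ℝ) 1)
    {p : ℝ} (hmean : ∀ i, ∫ ω, Z i ω ∂P = p) (l : ℝ) :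
    mgf (∑ i, Z i) P l ≤ Real.exp (n * (p * l + l ^ 2 / 8)) := by
  rw [hindep.mgf_sum hm]
  calc ∏ i : Fin n, mgf (Z i) P l ≤ ∏ _i : Fin n, Real.exp (p * l + l ^ 2 / 8) := by
        apply Finset.prod_le_prod (fun i _ => mgf_nonneg)
        exact fun i _ => hoeff_mgf (hm i) (hb i) (hmean i) l
  _ = Real.exp (n * (p * l + l ^ 2 / 8)) := by
      rw [Finset.prod_const, ← Real.exp_nat_mul]
      simp

lemma hoeff_tail_ge {n : ℕ} {Z : Fin n → Ω → ℝ} (hm : ∀ i, Measurable (Z i))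
    (hindep : iIndepFun Z P)
    (hb : ∀ i, ∀ᵐ ω ∂P, Z i ω ∈ Set.Icc (0:ℝ) 1)
    {p : ℝ} (hmean : ∀ i, ∫ ω, Z i ω ∂P = p) {ε : ℝ} (hε : 0 ≤ ε) :
    (P {ω | (n:ℝ) * p + n * ε ≤ ∑ i, Z i ω}).toReal ≤ Real.exp (-(2 * n * ε ^ 2)) := by
  have hint : Integrable (fun ω => Real.exp (4 * ε * (∑ i, Z i) ω)) P :=
    hindep.integrable_exp_mul_sum hm (fun i _ => hoeff_int_exp (hm i) (hb i) _)
  have h := measure_ge_le_exp_mul_mgf (X := ∑ i, Z i) (μ := P)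
    ((n:ℝ) * p + n * ε) (by positivity : (0:ℝ) ≤ 4 * ε) hint
  have hset : {ω | (n:ℝ) * p + n * ε ≤ (∑ i, Z i) ω}
      = {ω | (n:ℝ) * p + n * ε ≤ ∑ i, Z i ω} := by
    simp [Finset.sum_apply]
  rw [hset] at h
  refine h.trans ?_
  calc Real.exp (-(4 * ε) * ((n:ℝ) * p + n * ε)) * mgf (∑ i, Z i) P (4 * ε)
      ≤ Real.exp (-(4 * ε) * ((n:ℝ) * p + n * ε)) *
        Real.exp (n * (p * (4 * ε) + (4 * ε) ^ 2 / 8)) := by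
        exact mul_le_mul_of_nonneg_left
          (hoeff_mgf_sum_le hm hindep hb hmean _) (Real.exp_pos _).le
  _ = Real.exp (-(2 * n * ε ^ 2)) := by
      rw [← Real.exp_add]
      congr 1
      ring

lemma hoeff_tail_le {n : ℕ} {Z : Fin n → Ω → ℝ} (hm : ∀ i, Measurable (Z i))
    (hindep : iIndepFun Z P)
    (hb : ∀ i, ∀ᵐ ω ∂P, Z i ω ∈ Set.Icc (0:ℝ) 1)
    {p : ℝ} (hmean : ∀ i, ∫ ω, Z i ω ∂P = p) {ε : ℝ} (hε : 0 ≤ ε) :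
    (P {ω | ∑ i, Z i ω ≤ (n:ℝ) * p - n * ε}).toReal ≤ Real.exp (-(2 * n * ε ^ 2)) := by
  have hint : Integrable (fun ω => Real.exp (-(4 * ε) * (∑ i, Z i) ω)) P :=
    hindep.integrable_exp_mul_sum hm (fun i _ => hoeff_int_exp (hm i) (hb i) _)
  have h := measure_le_le_exp_mul_mgf (X := ∑ i, Z i) (μ := P)
    ((n:ℝ) * p - n * ε) (by nlinarith : -(4 * ε) ≤ (0:ℝ)) hint
  have hset : {ω | (∑ i, Z i) ω ≤ (n:ℝ) * p - n * ε}
      = {ω | ∑ i, Z i ω ≤ (n:ℝ) * p - n * ε} := by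
    simp [Finset.sum_apply]
  rw [hset] at h
  refine h.trans ?_
  calc Real.exp (-(-(4 * ε)) * ((n:ℝ) * p - n * ε)) * mgf (∑ i, Z i) P (-(4 * ε))
      ≤ Real.exp (-(-(4 * ε)) * ((n:ℝ) * p - n * ε)) *
        Real.exp (n * (p * (-(4 * ε)) + (-(4 * ε)) ^ 2 / 8)) := by
        exact mul_le_mul_of_nonneg_left
          (hoeff_mgf_sum_le hm hindep hb hmean _) (Real.exp_pos _).le
  _ = Real.exp (-(2 * n * ε ^ 2)) := by
      rw [← Real.exp_add]
      congr 1
      ring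

open MeasureTheory ProbabilityTheory

lemma iIndepFun_precomp {Ω ι κ β : Type*} [MeasurableSpace Ω] [MeasurableSpace β]
    {μ : Measure Ω} {f : ι → Ω → β}
    (h : iIndepFun f μ) {g : κ → ι}
    (hg : Function.Injective g) :
    iIndepFun (fun k => f (g k)) μ := by
  classical
  rw [iIndepFun_iff_measure_inter_preimage_eq_mul] at h ⊢
  intro S sets hsets
  rcases S.eq_empty_or_nonempty with rfl | hS
  · simpa using h ∅ (sets := fun _ => Set.univ) (by simp)
  have hne : Nonempty κ := ⟨hS.choose⟩
  set sets' : ι → Set β := fun i =>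
    if i ∈ S.image g then sets (Function.invFun g i) else Set.univ with hsets'def
  have hinv : ∀ k : κ, Function.invFun g (g k) = k := fun k =>
    Function.leftInverse_invFun hg k
  have hsets'gk : ∀ k ∈ S, sets' (g k) = sets k := by
    intro k hk
    simp only [hsets'def]
    rw [if_pos (Finset.mem_image_of_mem g hk), hinv]
  have hmeas' : ∀ i ∈ S.image g, MeasurableSet (sets' i) := by
    intro i hi
    rcases Finset.mem_image.1 hi with ⟨k, hk, rfl⟩
    rw [hsets'gk k hk]
    exact hsets k hk
  have key := h (S.image g) (sets := sets') hmeas'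
  have hInter : (⋂ i ∈ S.image g, f i ⁻¹' sets' i) = ⋂ k ∈ S, f (g k) ⁻¹' sets k := by
    rw [Finset.set_biInter_finset_image]
    exact Set.iInter₂_congr fun k hk => by rw [hsets'gk k hk]
  have hProd : (∏ i ∈ S.image g, μ (f i ⁻¹' sets' i)) = ∏ k ∈ S, μ (f (g k) ⁻¹' sets k) := by
    rw [Finset.prod_image (fun a _ b _ hab => hg hab)]
    exact Finset.prod_congr rfl fun k hk => by rw [hsets'gk k hk]
  rw [hInter, hProd] at key
  exact key

end Aux


open MeasureTheory ProbabilityTheory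

section MainProof

theorem ucb_index_comparison_bound {Ω : Type*} [MeasurableSpace Ω]
    (P : Measure Ω) [IsProbabilityMeasure P]
    (si sj : ℕ) (hsi : 0 < si) (hsj : 0 < sj)
    (X : Fin si → Ω → ℝ) (Y : Fin sj → Ω → ℝ)
    (hmeasX : ∀ i, Measurable (X i)) (hmeasY : ∀ j, Measurable (Y j))
    (hindep : iIndepFun (Sum.elim X Y) P)
    (hidentX : ∀ i i' : Fin si, Measure.map (X i) P = Measure.map (X i') P)
    (hidentY : ∀ j j' : Fin sj, Measure.map (Y j) P = Measure.map (Y j') P)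
    (hvalX : ∀ i, ∀ᵐ ω ∂P, X i ω ∈ Set.Icc (0 : ℝ) 1)
    (hvalY : ∀ j, ∀ᵐ ω ∂P, Y j ω ∈ Set.Icc (0 : ℝ) 1)
    (μi μj : ℝ)
    (hmeanX : ∀ i, ∫ ω, X i ω ∂P = μi) (hmeanY : ∀ j, ∫ ω, Y j ω ∂P = μj)
    (hlt : μi < μj) (Δ : ℝ) (hΔ : Δ = μj - μi)
    (t : ℝ) (ht : 1 < t)
    (hsamples : (si : ℝ) ≥ 8 * Real.log t / Δ ^ 2) :
    P {ω | (∑ i, X i ω) / si + Real.sqrt (2 * Real.log t / si)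
          ≥ (∑ j, Y j ω) / sj + Real.sqrt (2 * Real.log t / sj)}
      ≤ ENNReal.ofReal (2 / t ^ 4) := by
  have ht0 : (0:ℝ) < t := lt_trans zero_lt_one ht
  have hlogt : 0 < Real.log t := Real.log_pos ht
  have hΔpos : 0 < Δ := by rw [hΔ]; linarith
  have hsipos : (0:ℝ) < si := Nat.cast_pos.2 hsi
  have hsjpos : (0:ℝ) < sj := Nat.cast_pos.2 hsj
  set ci : ℝ := Real.sqrt (2 * Real.log t / si) with hcidef
  set cj : ℝ := Real.sqrt (2 * Real.log t / sj) with hcjdef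
  have hcinn : 0 ≤ ci := Real.sqrt_nonneg _
  have hcjnn : 0 ≤ cj := Real.sqrt_nonneg _
  have hci2 : ci ^ 2 = 2 * Real.log t / si :=
    Real.sq_sqrt (by positivity)
  have hcj2 : cj ^ 2 = 2 * Real.log t / sj :=
    Real.sq_sqrt (by positivity)
  have hciΔ : ci ≤ Δ / 2 := by
    have harg : 2 * Real.log t / si ≤ (Δ / 2) ^ 2 := by
      have h1 : 8 * Real.log t / Δ ^ 2 ≤ (si:ℝ) := hsamples
      have h2 : 8 * Real.log t ≤ (si:ℝ) * Δ ^ 2 := by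
        rw [div_le_iff₀ (by positivity)] at h1
        linarith
      rw [div_le_iff₀ hsipos]
      nlinarith
    calc ci ≤ Real.sqrt ((Δ / 2) ^ 2) := Real.sqrt_le_sqrt harg
    _ = Δ / 2 := Real.sqrt_sq (by linarith)
  -- events
  set A : Set Ω := {ω | (si:ℝ) * μi + si * ci ≤ ∑ i, X i ω} with hAdef
  set B : Set Ω := {ω | ∑ j, Y j ω ≤ (sj:ℝ) * μj - sj * cj} with hBdef
  have hsub : {ω | (∑ i, X i ω) / si + ci ≥ (∑ j, Y j ω) / sj + cj} ⊆ A ∪ B := by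
    intro ω hω
    simp only [Set.mem_setOf_eq] at hω
    by_contra hcon
    rw [Set.mem_union, not_or] at hcon
    obtain ⟨hA, hB⟩ := hcon
    simp only [hAdef, hBdef, Set.mem_setOf_eq, not_le] at hA hB
    have h1 : (∑ i, X i ω) / si < μi + ci := by
      rw [div_lt_iff₀ hsipos]
      nlinarith
    have h2 : μj - cj < (∑ j, Y j ω) / sj := by
      rw [lt_div_iff₀ hsjpos]
      nlinarith
    have hΔeq : μj = μi + Δ := by rw [hΔ]; ring
    linarith
  -- independence of the two families
  have hindepX : iIndepFun X P := by
    have := iIndepFun_precomp hindep (Sum.inl_injective (α := Fin si) (β := Fin sj))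
    exact this
  have hindepY : iIndepFun Y P := by
    have := iIndepFun_precomp hindep (Sum.inr_injective (α := Fin si) (β := Fin sj))
    exact this
  -- tail bounds
  have hexp : Real.exp (-(4 * Real.log t)) = (t ^ 4)⁻¹ := by
    rw [Real.exp_neg]
    congr 1
    rw [show (4:ℝ) * Real.log t = (4:ℕ) * Real.log t by norm_num,
      Real.exp_nat_mul, Real.exp_log ht0]
  have hPA : (P A).toReal ≤ (t ^ 4)⁻¹ := by
    have h := hoeff_tail_ge hmeasX hindepX hvalX hmeanX hcinn
    have heq : -(2 * (si:ℝ) * ci ^ 2) = -(4 * Real.log t) := by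
      rw [hci2]
      field_simp
      ring
    rw [heq, hexp] at h
    exact h
  have hPB : (P B).toReal ≤ (t ^ 4)⁻¹ := by
    have h := hoeff_tail_le hmeasY hindepY hvalY hmeanY hcjnn
    have heq : -(2 * (sj:ℝ) * cj ^ 2) = -(4 * Real.log t) := by
      rw [hcj2]
      field_simp
      ring
    have hset : {ω | ∑ j, Y j ω ≤ (sj:ℝ) * μj - sj * cj} = B := rfl
    rw [heq, hexp, hset] at h
    exact h
  have hA' : P A ≤ ENNReal.ofReal ((t ^ 4)⁻¹) := by
    rw [← ENNReal.ofReal_toReal (measure_ne_top P A)]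
    exact ENNReal.ofReal_le_ofReal hPA
  have hB' : P B ≤ ENNReal.ofReal ((t ^ 4)⁻¹) := by
    rw [← ENNReal.ofReal_toReal (measure_ne_top P B)]
    exact ENNReal.ofReal_le_ofReal hPB
  calc P {ω | (∑ i, X i ω) / si + Real.sqrt (2 * Real.log t / si)
          ≥ (∑ j, Y j ω) / sj + Real.sqrt (2 * Real.log t / sj)}
      ≤ P (A ∪ B) := measure_mono hsub
  _ ≤ P A + P B := measure_union_le A B
  _ ≤ ENNReal.ofReal ((t ^ 4)⁻¹) + ENNReal.ofReal ((t ^ 4)⁻¹) := add_le_add hA' hB'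
  _ = ENNReal.ofReal (2 / t ^ 4) := by
      rw [← ENNReal.ofReal_add (by positivity) (by positivity)]
      congr 1
      field_simp
      ring

end MainProof
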